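/- Let Q be a compact metric space and ℋ = (H_x)_{x∈Q} a Glaeser-stable bundle of non-empty affine subspaces of ℝ^r. Then for every ε > 0 there exists a continuous map g : Q → ℝ^r such that dist(g(y), H_y) ≤ ε for all y ∈ Q and |g(y)| ≤ ‖ℋ‖ + ε for all y ∈ Q, where ‖ℋ‖ = sup_{x∈Q} dist(0, H_x). -/

import Mathlib

open Filter Topology

/-- The Glaeser refinement of a bundle of fibers `H x ⊆ ℝ^r`. -/
def glaeserRef {Q : Type*} [MetricSpace Q] {r : ℕ}
    (H : Q → Set (EuclideanSpace ℝ (Fin r))) : Q → Set (EuclideanSpace ℝ (Fin r)) :=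
  fun x => {v ∈ H x | Tendsto (fun y => EMetric.infEdist v (H y)) (𝓝 x) (𝓝 0)}

/-- For a Glaeser-stable bundle of non-empty affine subspaces over a compact metric
space and any `ε > 0`, there is a continuous `g : Q → ℝ^r` with
`dist(g y, H y) ≤ ε` and `|g y| ≤ ‖ℋ‖ + ε` for all `y`, where
`‖ℋ‖ = sup_x dist(0, H x)`. -/
theorem statement10 (Q : Type*) [MetricSpace Q] [CompactSpace Q] (r : ℕ)
    (H : Q → Set (EuclideanSpace ℝ (Fin r)))
    (hH : ∀ x, ∃ A : AffineSubspace ℝ (EuclideanSpace ℝ (Fin r)), H x = (A : Set _))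
    (hne : ∀ x, (H x).Nonempty)
    (hstable : glaeserRef H = H)
    (ε : ℝ) (hε : 0 < ε) :
    ∃ g : Q → EuclideanSpace ℝ (Fin r), Continuous g ∧
      (∀ y, Metric.infDist (g y) (H y) ≤ ε) ∧
      (∀ y, ‖g y‖ ≤ (⨆ x, Metric.infDist 0 (H x)) + ε) := by
  classical
  rcases isEmpty_or_nonempty Q with hQ | hQ
  · exact ⟨fun _ => 0, continuous_const, fun y => (hQ.false y).elim,
      fun y => (hQ.false y).elim⟩
  have hclosed : ∀ x, IsClosed (H x) := by
    intro x; obtain ⟨A, hA⟩ := hH x; rw [hA]; exact A.closed_of_finiteDimensional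
  have hconv : ∀ x, Convex ℝ (H x) := by
    intro x; obtain ⟨A, hA⟩ := hH x; rw [hA]; exact A.convex
  -- choose nearest points to 0
  have hv : ∀ x, ∃ w ∈ H x, Metric.infDist 0 (H x) = dist 0 w :=
    fun x => (hclosed x).exists_infDist_eq_dist (hne x) 0
  choose v hvmem hvdist using hv
  have hvnorm : ∀ x, ‖v x‖ = Metric.infDist 0 (H x) := by
    intro x; rw [hvdist x, dist_zero_left]
  -- Glaeser stability gives eventual closeness
  have key : ∀ x, ∀ᶠ y in 𝓝 x, Metric.infDist (v x) (H y) ≤ ε := by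
    intro x
    have h1 : v x ∈ glaeserRef H x := by rw [hstable]; exact hvmem x
    have h3 : ∀ᶠ y in 𝓝 x, EMetric.infEdist (v x) (H y) < ENNReal.ofReal ε :=
      h1.2.eventually_lt_const (ENNReal.ofReal_pos.mpr hε)
    filter_upwards [h3] with y hy
    have : (EMetric.infEdist (v x) (H y)).toReal ≤ ε :=
      ENNReal.toReal_le_of_le_ofReal hε.le hy.le
    simpa [Metric.infDist, EMetric.infEdist] using this
  have hball : ∀ x, ∃ δ > 0, ∀ y, dist y x < δ → Metric.infDist (v x) (H y) ≤ ε := by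
    intro x
    rcases Metric.eventually_nhds_iff_ball.mp (key x) with ⟨δ, hδ, hδ'⟩
    exact ⟨δ, hδ, fun y hy => hδ' y (by simpa [Metric.mem_ball] using hy)⟩
  choose δ hδpos hδ using hball
  -- finite subcover
  obtain ⟨t, ht⟩ := isCompact_univ.elim_finite_subcover (fun x => Metric.ball x (δ x))
    (fun x => Metric.isOpen_ball)
    (fun y _ => Set.mem_iUnion.2 ⟨y, Metric.mem_ball_self (hδpos y)⟩)
  have hcover : ∀ y : Q, ∃ i ∈ t, dist y i < δ i := by
    intro y
    have := ht (Set.mem_univ y)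
    simpa [Metric.mem_ball] using this
  -- boundedness of the fiber distances
  have hbdd : BddAbove (Set.range fun x => Metric.infDist 0 (H x)) := by
    refine ⟨ε + ∑ i ∈ t, ‖v i‖, ?_⟩
    rintro _ ⟨y, rfl⟩
    obtain ⟨i, hit, hyi⟩ := hcover y
    have h1 : Metric.infDist 0 (H y) ≤ Metric.infDist (v i) (H y) + dist 0 (v i) :=
      Metric.infDist_le_infDist_add_dist
    have h2 := hδ i y hyi
    have h3 : ‖v i‖ ≤ ∑ j ∈ t, ‖v j‖ :=
      Finset.single_le_sum (fun j _ => norm_nonneg _) hit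
    rw [dist_zero_left] at h1
    linarith
  set M : ℝ := ⨆ x, Metric.infDist 0 (H x) with hM
  have hle : ∀ x, Metric.infDist 0 (H x) ≤ M := fun x => le_ciSup hbdd x
  -- partition of unity
  set φ : Q → Q → ℝ := fun i y => max (δ i - dist y i) 0 with hφ
  have hφcont : ∀ i, Continuous (φ i) :=
    fun i => (continuous_const.sub (continuous_id.dist continuous_const)).max continuous_const
  have hφnonneg : ∀ i y, 0 ≤ φ i y := fun i y => le_max_right _ _
  have hφsupp : ∀ i y, φ i y ≠ 0 → dist y i < δ i := by
    intro i y h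
    by_contra h'
    push_neg at h'
    exact h (max_eq_right (by linarith))
  set σ : Q → ℝ := fun y => ∑ i ∈ t, φ i y with hσ
  have hσpos : ∀ y, 0 < σ y := by
    intro y
    obtain ⟨i, hit, hyi⟩ := hcover y
    have : 0 < φ i y := lt_max_of_lt_left (by linarith)
    exact Finset.sum_pos' (fun j _ => hφnonneg j y) ⟨i, hit, this⟩
  set c : Q → Q → ℝ := fun i y => (σ y)⁻¹ * φ i y with hc
  have hcnonneg : ∀ i y, 0 ≤ c i y :=
    fun i y => mul_nonneg (inv_nonneg.2 (hσpos y).le) (hφnonneg i y)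
  have hcsum : ∀ y, ∑ i ∈ t, c i y = 1 := by
    intro y
    rw [← Finset.mul_sum]
    exact inv_mul_cancel₀ (hσpos y).ne'
  have hcε : ∀ i y, c i y * Metric.infDist (v i) (H y) ≤ c i y * ε := by
    intro i y
    rcases eq_or_ne (φ i y) 0 with h | h
    · simp [hc, h]
    · exact mul_le_mul_of_nonneg_left (hδ i y (hφsupp i y h)) (hcnonneg i y)
  refine ⟨fun y => ∑ i ∈ t, c i y • v i, ?_, ?_, ?_⟩
  · refine continuous_finset_sum _ fun i _ => ?_
    exact (((continuous_finset_sum _ fun j _ => hφcont j).inv₀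
      fun y => (hσpos y).ne').mul (hφcont i)).smul continuous_const
  · intro y
    choose w hwmem hwdist using
      fun i => (hclosed y).exists_infDist_eq_dist (hne y) (v i)
    have hp : (∑ i ∈ t, c i y • w i) ∈ H y :=
      (hconv y).sum_mem (fun i _ => hcnonneg i y) (hcsum y) (fun i _ => hwmem i)
    have h1 : Metric.infDist (∑ i ∈ t, c i y • v i) (H y) ≤
        dist (∑ i ∈ t, c i y • v i) (∑ i ∈ t, c i y • w i) :=
      Metric.infDist_le_dist_of_mem hp
    have h2 : dist (∑ i ∈ t, c i y • v i) (∑ i ∈ t, c i y • w i) ≤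
        ∑ i ∈ t, c i y * ε := by
      rw [dist_eq_norm, ← Finset.sum_sub_distrib]
      refine (norm_sum_le _ _).trans (Finset.sum_le_sum fun i hi => ?_)
      rw [← smul_sub, norm_smul, Real.norm_eq_abs, abs_of_nonneg (hcnonneg i y),
        ← dist_eq_norm, ← hwdist i]
      exact hcε i y
    calc Metric.infDist (∑ i ∈ t, c i y • v i) (H y) ≤ ∑ i ∈ t, c i y * ε :=
          h1.trans h2
      _ = ε := by rw [← Finset.sum_mul, hcsum y, one_mul]
  · intro y
    have h1 : ‖∑ i ∈ t, c i y • v i‖ ≤ ∑ i ∈ t, c i y * M := by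
      refine (norm_sum_le _ _).trans (Finset.sum_le_sum fun i hi => ?_)
      rw [norm_smul, Real.norm_eq_abs, abs_of_nonneg (hcnonneg i y)]
      exact mul_le_mul_of_nonneg_left ((hvnorm i).le.trans (hle i)) (hcnonneg i y)
    have h2 : ∑ i ∈ t, c i y * M = M := by rw [← Finset.sum_mul, hcsum y, one_mul]
    rw [h2] at h1
    linarith
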